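/- arXiv:1104.2217 — 6 statements merged into one kernel-verified Lean document; each statement's English description precedes it below -/
import Mathlib

section
/- The Gale-Shapley algorithm with men proposing terminates after finitely many rounds and produces a stable matching between W and M. -/
namespace GS

/-- The `k` most-preferred elements of `S` according to the rank function `rank`
(lower rank = more preferred); if `S` has at most `k` elements this is all of `S`. -/
def topk {α : Type*} [DecidableEq α] (rank : α → ℕ) (k : ℕ) (S : Finset α) : Finset α :=
  S.filter fun a => (S.filter fun b => rank b < rank a).card < k

/-- An instance of the stable-matching problem with `n` women and `n` men.
`mpref m w` is the rank man `m` assigns to woman `w` (lower = more preferred),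
and `wpref w m` is the rank woman `w` assigns to man `m`. -/
structure Instance (n : ℕ) where
  mpref : Fin n → Fin n → ℕ
  wpref : Fin n → Fin n → ℕ
  mprefInj : ∀ m, Function.Injective (mpref m)
  wprefInj : ∀ w, Function.Injective (wpref w)

variable {n : ℕ}

/-- `prefers p a b` : `a` is strictly preferred to `b` under rank function `p`. -/
def prefers (p : Fin n → ℕ) (a b : Fin n) : Prop := p a < p b

/-- Given the current state `avail m` (the women who have not yet rejected man `m`),
the set of women man `m` proposes to tonight: his most-preferred available woman
(a singleton, or empty if no woman is available). -/
def proposals (I : Instance n) (avail : Fin n → Finset (Fin n)) (m : Fin n) :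
    Finset (Fin n) := topk (I.mpref m) 1 (avail m)

/-- The men proposing to woman `w` tonight. -/
def proposersOf (I : Instance n) (avail : Fin n → Finset (Fin n)) (w : Fin n) :
    Finset (Fin n) := Finset.univ.filter fun m => w ∈ proposals I avail m

/-- The men rejected by woman `w` tonight: all of tonight's proposers except
her most-preferred one. -/
def rejectedBy (I : Instance n) (avail : Fin n → Finset (Fin n)) (w : Fin n) :
    Finset (Fin n) := proposersOf I avail w \ topk (I.wpref w) 1 (proposersOf I avail w)

/-- One night of the men-proposing Gale-Shapley algorithm. -/
def step (I : Instance n) (avail : Fin n → Finset (Fin n)) :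
    Fin n → Finset (Fin n) :=
  fun m => (avail m).filter fun w => m ∉ rejectedBy I avail w

/-- `nights I t m` : the set of women who have not rejected man `m` before night `t`
(initially all women). -/
def nights (I : Instance n) (t : ℕ) : Fin n → Finset (Fin n) :=
  (step I)^[t] (fun _ => Finset.univ)

/-- The algorithm has terminated by night `T`: no man is rejected on night `T`. -/
def Stopped (I : Instance n) (T : ℕ) : Prop := step I (nights I T) = nights I T

/-- On night `T`, each man `m` serenades exactly under the window of `μ m`. -/
def MatchesAt (I : Instance n) (T : ℕ) (μ : Fin n ≃ Fin n) : Prop :=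
  ∀ m, proposals I (nights I T) m = {μ m}

/-- The bijection `μ` (from men to women) is the outcome of the men-proposing
Gale-Shapley algorithm on instance `I`: for some night `T` no rejection occurs and
every man `m` is matched with `μ m`. -/
def IsGSMatching (I : Instance n) (μ : Fin n ≃ Fin n) : Prop :=
  ∃ T, Stopped I T ∧ MatchesAt I T μ

/-- Stability of a matching `μ` (men to women): there is no unmatched pair `(w, m)`
each of whom strictly prefers the other to their partner under `μ`. -/
def Stable (I : Instance n) (μ : Fin n ≃ Fin n) : Prop :=
  ¬ ∃ m w, μ m ≠ w ∧ I.mpref m w < I.mpref m (μ m) ∧ I.wpref w m < I.wpref w (μ.symm w)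

/-- The instance in which the women in `L` replace their true preferences by the
false preference rankings `f`, everyone else being truthful. -/
def liarInstance (I : Instance n) (L : Finset (Fin n))
    (f : Fin n → Fin n → ℕ) (hf : ∀ w, Function.Injective (f w)) : Instance n where
  mpref := I.mpref
  wpref := fun w => if w ∈ L then f w else I.wpref w
  mprefInj := I.mprefInj
  wprefInj := fun w => by split_ifs; exacts [hf w, I.wprefInj w]

end GS

namespace GS

section Aux
variable {n : ℕ} (I : Instance n)

lemma mem_topk1 {α : Type*} [DecidableEq α] {rank : α → ℕ} {S : Finset α} {a : α} :
    a ∈ topk rank 1 S ↔ a ∈ S ∧ ∀ b ∈ S, rank a ≤ rank b := by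
  simp only [topk, Finset.mem_filter, Nat.lt_one_iff, Finset.card_eq_zero,
    Finset.filter_eq_empty_iff, not_lt]

lemma topk1_nonempty {α : Type*} [DecidableEq α] {rank : α → ℕ} {S : Finset α}
    (hS : S.Nonempty) : (topk rank 1 S).Nonempty := by
  obtain ⟨a, ha, hmin⟩ := S.exists_min_image rank hS
  exact ⟨a, mem_topk1.2 ⟨ha, hmin⟩⟩

lemma topk1_subsingleton {α : Type*} [DecidableEq α] {rank : α → ℕ}
    (hinj : Function.Injective rank) {S : Finset α} {a b : α}
    (ha : a ∈ topk rank 1 S) (hb : b ∈ topk rank 1 S) : a = b := by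
  obtain ⟨haS, hamin⟩ := mem_topk1.1 ha
  obtain ⟨hbS, hbmin⟩ := mem_topk1.1 hb
  exact hinj (le_antisymm (hamin b hbS) (hbmin a haS))

lemma mem_proposals {avail : Fin n → Finset (Fin n)} {m w : Fin n} :
    w ∈ proposals I avail m ↔ w ∈ avail m ∧ ∀ w' ∈ avail m, I.mpref m w ≤ I.mpref m w' :=
  mem_topk1

lemma proposals_subsingleton {avail : Fin n → Finset (Fin n)} {m w w' : Fin n}
    (h : w ∈ proposals I avail m) (h' : w' ∈ proposals I avail m) : w = w' :=
  topk1_subsingleton (I.mprefInj m) h h'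

lemma step_subset (avail : Fin n → Finset (Fin n)) (m : Fin n) :
    step I avail m ⊆ avail m := Finset.filter_subset _ _

lemma mem_step {avail : Fin n → Finset (Fin n)} {m w : Fin n} :
    w ∈ step I avail m ↔ w ∈ avail m ∧ m ∉ rejectedBy I avail w := Finset.mem_filter

lemma mem_proposersOf {avail : Fin n → Finset (Fin n)} {m w : Fin n} :
    m ∈ proposersOf I avail w ↔ w ∈ proposals I avail m := by
  simp [proposersOf]

lemma rejectedBy_mem_avail {avail : Fin n → Finset (Fin n)} {w m : Fin n}
    (h : m ∈ rejectedBy I avail w) : w ∈ avail m := by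
  have := (mem_proposersOf I).1 (Finset.mem_sdiff.1 h).1
  exact ((mem_proposals I).1 this).1

lemma proposal_persists {avail : Fin n → Finset (Fin n)} {m w : Fin n}
    (hw : w ∈ proposals I avail m) (hnr : m ∉ rejectedBy I avail w) :
    w ∈ proposals I (step I avail) m := by
  rw [mem_proposals] at hw ⊢
  exact ⟨(mem_step I).2 ⟨hw.1, hnr⟩, fun w' hw' => hw.2 w' (step_subset I avail m hw')⟩

/-- Woman `w` currently has a proposer of rank at most `r`. -/
def HPLe (avail : Fin n → Finset (Fin n)) (w : Fin n) (r : ℕ) : Prop :=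
  ∃ m, w ∈ proposals I avail m ∧ I.wpref w m ≤ r

lemma HPLe_step {avail : Fin n → Finset (Fin n)} {w : Fin n} {r : ℕ}
    (h : HPLe I avail w r) : HPLe I (step I avail) w r := by
  obtain ⟨m, hm, hr⟩ := h
  have hP : (proposersOf I avail w).Nonempty := ⟨m, (mem_proposersOf I).2 hm⟩
  obtain ⟨m', hm'⟩ := topk1_nonempty hP
  have hm'P : m' ∈ proposersOf I avail w := (mem_topk1.1 hm').1
  have hm'prop : w ∈ proposals I avail m' := (mem_proposersOf I).1 hm'P
  have hnr : m' ∉ rejectedBy I avail w := fun hc => (Finset.mem_sdiff.1 hc).2 hm'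
  refine ⟨m', proposal_persists I hm'prop hnr, ?_⟩
  exact le_trans ((mem_topk1.1 hm').2 m ((mem_proposersOf I).2 hm)) hr

lemma rejected_exists_better {avail : Fin n → Finset (Fin n)} {w m : Fin n}
    (h : m ∈ rejectedBy I avail w) :
    ∃ m', w ∈ proposals I avail m' ∧ I.wpref w m' < I.wpref w m := by
  obtain ⟨hmP, hmnot⟩ := Finset.mem_sdiff.1 h
  obtain ⟨m', hm'⟩ := topk1_nonempty ⟨m, hmP⟩
  have hm'P : m' ∈ proposersOf I avail w := (mem_topk1.1 hm').1
  refine ⟨m', (mem_proposersOf I).1 hm'P, ?_⟩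
  have hle : I.wpref w m' ≤ I.wpref w m := (mem_topk1.1 hm').2 m hmP
  rcases Nat.lt_or_ge (I.wpref w m') (I.wpref w m) with h1 | h1
  · exact h1
  · have heq : I.wpref w m' = I.wpref w m := le_antisymm hle h1
    exact absurd (I.wprefInj w heq ▸ hm') hmnot

lemma nights_succ (t : ℕ) : nights I (t + 1) = step I (nights I t) :=
  Function.iterate_succ_apply' _ _ _

lemma nights_antitone {s t : ℕ} (h : s ≤ t) (m : Fin n) :
    nights I t m ⊆ nights I s m := by
  induction t with
  | zero => simp_all
  | succ t ih =>
    rcases Nat.lt_or_ge s (t + 1) with h1 | h1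
    · exact (nights_succ I t ▸ step_subset I (nights I t) m).trans
        (ih (Nat.lt_succ_iff.1 h1))
    · have : s = t + 1 := le_antisymm h h1
      subst this; exact Finset.Subset.refl _

lemma exists_proposer_of_rejected : ∀ t (w m : Fin n), w ∉ nights I t m →
    ∃ m', w ∈ proposals I (nights I t) m' := by
  intro t
  induction t with
  | zero => intro w m hw; exact absurd (Finset.mem_univ w) hw
  | succ t ih =>
    intro w m hw
    rw [nights_succ] at hw ⊢
    by_cases h : w ∈ nights I t m
    · have hrej : m ∈ rejectedBy I (nights I t) w := by
        by_contra hc; exact hw ((mem_step I).2 ⟨h, hc⟩)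
      obtain ⟨m', hm', _⟩ := rejected_exists_better I hrej
      obtain ⟨m'', hm'', _⟩ := HPLe_step I ⟨m', hm', le_refl (I.wpref w m')⟩
      exact ⟨m'', hm''⟩
    · obtain ⟨m', hm'⟩ := ih w m h
      obtain ⟨m'', hm'', _⟩ := HPLe_step I ⟨m', hm', le_refl (I.wpref w m')⟩
      exact ⟨m'', hm''⟩

lemma nights_nonempty (t : ℕ) (m : Fin n) : (nights I t m).Nonempty := by
  rw [Finset.nonempty_iff_ne_empty]
  intro hempty
  have hall : ∀ w, ∃ m', w ∈ proposals I (nights I t) m' := fun w =>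
    exists_proposer_of_rejected I t w m (by simp [hempty])
  choose f hf using hall
  have hinj : Function.Injective f := fun w w' h =>
    proposals_subsingleton I (h ▸ hf w) (hf w')
  obtain ⟨w, hw⟩ := Finite.injective_iff_surjective.1 hinj m
  have : w ∈ nights I t m := ((mem_proposals I).1 (hw ▸ hf w)).1
  simp [hempty] at this

lemma exists_stopped : ∃ T, Stopped I T := by
  by_contra hc
  push_neg at hc
  set F : ℕ → ℕ := fun t => ∑ m, (nights I t m).card with hF
  have hdec : ∀ t, F (t + 1) < F t := by
    intro t
    have hne : step I (nights I t) ≠ nights I t := hc t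
    have hex : ∃ m, nights I (t + 1) m ≠ nights I t m := by
      by_contra h; push_neg at h
      exact hne (funext fun m => (nights_succ I t) ▸ h m)
    obtain ⟨m0, hm0⟩ := hex
    apply Finset.sum_lt_sum
    · intro i _
      exact Finset.card_le_card (nights_succ I t ▸ step_subset I (nights I t) i)
    · exact ⟨m0, Finset.mem_univ m0, Finset.card_lt_card
        (Finset.ssubset_iff_subset_ne.2 ⟨nights_succ I t ▸ step_subset I (nights I t) m0, hm0⟩)⟩
  have hle : ∀ t, F t + t ≤ F 0 := by
    intro t
    induction t with
    | zero => simp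
    | succ t ih =>
      have := hdec t
      omega
  have := hle (F 0 + 1)
  omega

lemma stopped_no_reject {T : ℕ} (hT : Stopped I T) (w : Fin n) :
    rejectedBy I (nights I T) w = ∅ := by
  rw [Finset.eq_empty_iff_forall_notMem]
  intro m hm
  have hw : w ∈ nights I T m := rejectedBy_mem_avail I hm
  have hw' : w ∈ step I (nights I T) m := by rw [hT]; exact hw
  exact ((mem_step I).1 hw').2 hm

lemma stopped_proposers_subsingleton {T : ℕ} (hT : Stopped I T) {w m m' : Fin n}
    (h : w ∈ proposals I (nights I T) m) (h' : w ∈ proposals I (nights I T) m') : m = m' := by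
  have hsub : proposersOf I (nights I T) w ⊆
      topk (I.wpref w) 1 (proposersOf I (nights I T) w) := by
    intro x hx
    by_contra hcx
    have : x ∈ rejectedBy I (nights I T) w := Finset.mem_sdiff.2 ⟨hx, hcx⟩
    rw [stopped_no_reject I hT w] at this
    exact absurd this (Finset.notMem_empty x)
  exact topk1_subsingleton (I.wprefInj w)
    (hsub ((mem_proposersOf I).2 h)) (hsub ((mem_proposersOf I).2 h'))

end Aux
end GS

open GS in
/-- The men-proposing Gale-Shapley algorithm terminates after finitely many nights
and produces a stable matching. -/
theorem gale_shapley_terminates_and_is_stable (n : ℕ) (I : GS.Instance n) :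
    ∃ μ : Fin n ≃ Fin n, IsGSMatching I μ ∧ Stable I μ := by
  classical
  obtain ⟨T, hT⟩ := exists_stopped I
  have hne : ∀ m, (proposals I (nights I T) m).Nonempty :=
    fun m => topk1_nonempty (nights_nonempty I T m)
  choose f hf using hne
  have hprop : ∀ m, proposals I (nights I T) m = {f m} := by
    intro m
    ext w
    simp only [Finset.mem_singleton]
    exact ⟨fun hw => proposals_subsingleton I hw (hf m), fun h => h ▸ hf m⟩
  have hinj : Function.Injective f := fun m m' h =>
    stopped_proposers_subsingleton I hT (hf m) (h ▸ hf m')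
  have hbij : Function.Bijective f := Finite.injective_iff_bijective.1 hinj
  refine ⟨Equiv.ofBijective f hbij, ⟨T, hT, fun m => hprop m⟩, ?_⟩
  rintro ⟨m, w, hnemw, hmpref, hwpref⟩
  set μ := Equiv.ofBijective f hbij with hμ
  have hμm : ∀ m', μ m' = f m' := fun _ => rfl
  rw [hμm m] at hmpref hnemw
  have hwnot : w ∉ nights I T m := by
    intro hwm
    have := ((mem_proposals I).1 (hf m)).2 w hwm
    omega
  have hex : ∃ s, w ∉ nights I s m := ⟨T, hwnot⟩
  have hs0 : w ∉ nights I (Nat.find hex) m := Nat.find_spec hex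
  have hs0pos : Nat.find hex ≠ 0 := by
    intro h
    rw [h] at hs0
    exact hs0 (Finset.mem_univ w)
  obtain ⟨t, ht⟩ := Nat.exists_eq_succ_of_ne_zero hs0pos
  rw [ht, Nat.succ_eq_add_one] at hs0
  have hwt : w ∈ nights I t m := by
    by_contra hcw
    have := Nat.find_min' hex hcw
    omega
  have hrej : m ∈ rejectedBy I (nights I t) w := by
    by_contra hcr
    have : w ∈ nights I (t + 1) m := by
      rw [nights_succ]
      exact (mem_step I).2 ⟨hwt, hcr⟩
    exact hs0 this
  obtain ⟨mstar, hms, hmslt⟩ := rejected_exists_better I hrej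
  have hprop2 : ∀ k, HPLe I (nights I (t + k)) w (I.wpref w mstar) := by
    intro k
    induction k with
    | zero => exact ⟨mstar, hms, le_refl _⟩
    | succ k ih =>
      have : t + (k + 1) = (t + k) + 1 := by omega
      rw [this, nights_succ]
      exact HPLe_step I ih
  have htT : t ≤ T := by
    by_contra hcT
    push_neg at hcT
    exact hwnot (nights_antitone I (le_of_lt hcT) m hwt)
  obtain ⟨k, hk⟩ := Nat.exists_eq_add_of_le htT
  obtain ⟨m', hm'prop, hm'le⟩ := hprop2 k
  rw [← hk] at hm'prop
  have hwfm' : w = f m' := by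
    rw [hprop m'] at hm'prop
    simpa using hm'prop
  have hsym : μ.symm w = m' := by
    rw [Equiv.symm_apply_eq, hμm m', hwfm']
  rw [hsym] at hwpref
  omega
end

section
/- The matching produced by the men-proposing Gale-Shapley algorithm is man-optimal: for every man m and every stable matching μ, m does not strictly prefer μ(m) to his Gale-Shapley partner. -/
open GS

lemma mem_topk_one {α : Type*} [DecidableEq α] {rank : α → ℕ} {S : Finset α} {a : α} :
    a ∈ topk rank 1 S ↔ a ∈ S ∧ ∀ b ∈ S, ¬ rank b < rank a := by
  simp only [topk, Finset.mem_filter, Nat.lt_one_iff, Finset.card_eq_zero,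
    Finset.filter_eq_empty_iff]

lemma achievable {n : ℕ} (I : GS.Instance n) (ν : Fin n ≃ Fin n) (hν : Stable I ν) :
    ∀ t m, ν m ∈ nights I t m := by
  intro t
  induction t with
  | zero => intro m; simp [nights]
  | succ t ih =>
    intro m
    have hstep : nights I (t+1) m = step I (nights I t) m := by
      simp [nights, Function.iterate_succ_apply']
    rw [hstep, step, Finset.mem_filter]
    refine ⟨ih m, ?_⟩
    intro hrej
    rw [rejectedBy, Finset.mem_sdiff] at hrej
    obtain ⟨hprop, htop⟩ := hrej
    -- find a better proposer m'
    have hne : ∃ m' ∈ proposersOf I (nights I t) (ν m),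
        I.wpref (ν m) m' < I.wpref (ν m) m := by
      by_contra h
      push_neg at h
      exact htop (mem_topk_one.mpr ⟨hprop, fun b hb => not_lt.mpr (h b hb)⟩)
    obtain ⟨m', hm', hw⟩ := hne
    rw [proposersOf, Finset.mem_filter] at hm'
    have hprop' := hm'.2
    rw [proposals] at hprop'
    rw [mem_topk_one] at hprop'
    obtain ⟨hmem, hbest⟩ := hprop'
    have hmm : m' ≠ m := by rintro rfl; exact lt_irrefl _ hw
    have hneq : ν m' ≠ ν m := fun h => hmm (ν.injective h)
    have h1 : I.mpref m' (ν m) < I.mpref m' (ν m') := by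
      have := hbest (ν m') (ih m')
      rcases lt_or_eq_of_le (not_lt.mp this) with h | h
      · exact h
      · exact absurd (I.mprefInj m' h).symm hneq
    exact hν ⟨m', ν m, hneq, h1, by simpa using hw⟩

open GS in
/-- Man-optimality: no man strictly prefers his partner in any stable matching `ν`
to his Gale-Shapley partner. -/
theorem gale_shapley_man_optimal (n : ℕ) (I : GS.Instance n)
    (μ : Fin n ≃ Fin n) (hμ : IsGSMatching I μ)
    (ν : Fin n ≃ Fin n) (hν : Stable I ν) (m : Fin n) :
    ¬ prefers (I.mpref m) (ν m) (μ m) := by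
  obtain ⟨T, -, hmatch⟩ := hμ
  have h1 : μ m ∈ proposals I (nights I T) m := by rw [hmatch m]; simp
  rw [proposals, mem_topk_one] at h1
  exact h1.2 (ν m) (achievable I ν hν T m)
end

section
/- If, after some subset L of women lie about their preferences in the men-proposing Gale-Shapley algorithm, the resulting new matching is stable with respect to everyone's true preferences, then no woman is worse-off and no man is better-off compared to the truthful Gale-Shapley matching. -/
namespace GS

lemma mem_topk1_iff {α : Type*} [DecidableEq α] (rank : α → ℕ) (S : Finset α) (a : α) :
    a ∈ topk rank 1 S ↔ a ∈ S ∧ ∀ b ∈ S, ¬ rank b < rank a := by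
  simp [topk, Nat.lt_one_iff, Finset.card_eq_zero, Finset.filter_eq_empty_iff]

lemma stable_mem_nights {n : ℕ} (I : Instance n) (μ : Fin n ≃ Fin n) (hs : Stable I μ) :
    ∀ t m, μ m ∈ nights I t m := by
  intro t
  induction t with
  | zero => intro m; simp [nights]
  | succ t ih =>
    intro m
    have h1 : nights I (t + 1) = step I (nights I t) := by
      simp [nights, Function.iterate_succ_apply']
    rw [h1]
    simp only [step, Finset.mem_filter]
    refine ⟨ih m, ?_⟩
    intro hrej
    simp only [rejectedBy, Finset.mem_sdiff] at hrej
    obtain ⟨hprop, hnot⟩ := hrej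
    rw [mem_topk1_iff] at hnot
    push_neg at hnot
    obtain ⟨m', hm', hlt⟩ := hnot hprop
    simp only [proposersOf, Finset.mem_filter, Finset.mem_univ, true_and] at hm'
    rw [proposals, mem_topk1_iff] at hm'
    obtain ⟨havail, hbest⟩ := hm'
    have hne : μ m' ≠ μ m := by
      intro h
      have hmm : m' = m := μ.injective h
      subst hmm
      exact lt_irrefl _ hlt
    have hle : I.mpref m' (μ m) ≤ I.mpref m' (μ m') :=
      not_lt.mp (hbest (μ m') (ih m'))
    have hpref : I.mpref m' (μ m) < I.mpref m' (μ m') :=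
      lt_of_le_of_ne hle (fun h => hne ((I.mprefInj m' h).symm))
    exact hs ⟨m', μ m, hne, hpref, by simpa using hlt⟩

end GS

open GS in
/-- If the matching resulting from the lies of the women in `L` is stable with
respect to the true preferences, then no woman is worse-off and no man is
better-off compared with the truthful Gale-Shapley matching. -/
theorem stable_lie_outcome (n : ℕ) (I : GS.Instance n)
    (L : Finset (Fin n)) (f : Fin n → Fin n → ℕ) (hf : ∀ w, Function.Injective (f w))
    (O N : Fin n ≃ Fin n)
    (hO : IsGSMatching I O) (hN : IsGSMatching (liarInstance I L f hf) N)
    (hstable : Stable I N) :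
    (∀ w, ¬ prefers (I.wpref w) (O.symm w) (N.symm w)) ∧
    (∀ m, ¬ prefers (I.mpref m) (N m) (O m)) := by
  have hman : ∀ m, ¬ prefers (I.mpref m) (N m) (O m) := by
    intro m hlt
    obtain ⟨T, hT, hmatch⟩ := hO
    have h1 : O m ∈ proposals I (nights I T) m := by rw [hmatch m]; simp
    rw [proposals, GS.mem_topk1_iff] at h1
    exact h1.2 (N m) (GS.stable_mem_nights I N hstable T m) hlt
  refine ⟨?_, hman⟩
  intro w hlt
  set m := O.symm w with hm
  have hOm : O m = w := O.apply_symm_apply w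
  have hne : N m ≠ w := by
    intro h
    have h2 : N.symm w = m := by rw [← h, Equiv.symm_apply_apply]
    rw [h2] at hlt
    exact lt_irrefl _ hlt
  have h1 : I.mpref m (O m) ≤ I.mpref m (N m) := not_lt.mp (hman m)
  rw [hOm] at h1
  have hstrict : I.mpref m w < I.mpref m (N m) :=
    lt_of_le_of_ne h1 (fun h => hne ((I.mprefInj m h).symm))
  exact hstable ⟨m, w, hne, hstrict, hlt⟩
end

section
/- In the setting of lying women in the men-proposing Gale-Shapley algorithm: if a man m is better-off (truly prefers N(m) to O(m)), then his new partner N(m) is a rejecter, i.e., N(m) rejected m at some point during the original truthful run. -/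
open GS in
/-- In the setting of lying women: if a man `m` is better-off (he truly prefers his
new partner `N(m)` to his original partner `O(m)`), then `N(m)` is a rejecter:
she rejected `m` on some night of the original truthful run. -/
theorem better_off_man_implies_new_partner_rejecter (n : ℕ) (I : GS.Instance n)
    (L : Finset (Fin n)) (f : Fin n → Fin n → ℕ) (hf : ∀ w, Function.Injective (f w))
    (T : ℕ) (hT : Stopped I T) (O : Fin n ≃ Fin n) (hO : MatchesAt I T O)
    (N : Fin n ≃ Fin n) (hN : IsGSMatching (liarInstance I L f hf) N)
    (m : Fin n) (hbetter : prefers (I.mpref m) (N m) (O m)) :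
    ∃ t ≤ T, m ∈ rejectedBy I (nights I t) (N m) := by
  -- First: N m is not available to m on night T.
  have hOm : O m ∈ proposals I (nights I T) m := by
    rw [hO m]; exact Finset.mem_singleton_self _
  rw [proposals, topk, Finset.mem_filter] at hOm
  have hnot : N m ∉ nights I T m := by
    intro hmem
    have h1 : N m ∈ (nights I T m).filter
        (fun b => I.mpref m b < I.mpref m (O m)) :=
      Finset.mem_filter.mpr ⟨hmem, hbetter⟩
    have hpos : 0 < ((nights I T m).filter
        (fun b => I.mpref m b < I.mpref m (O m))).card :=
      Finset.card_pos.mpr ⟨N m, h1⟩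
    omega
  by_contra hcon
  push_neg at hcon
  have key : ∀ t, t ≤ T → N m ∈ nights I t m := by
    intro t
    induction t with
    | zero => intro _; simp [nights]
    | succ k ih =>
      intro hk
      have hk' : k ≤ T := Nat.le_of_succ_le hk
      have hmem : N m ∈ nights I k m := ih hk'
      have hrej : m ∉ rejectedBy I (nights I k) (N m) := hcon k hk'
      have : nights I (k + 1) = step I (nights I k) := by
        rw [nights, Function.iterate_succ_apply']; rfl
      rw [this, step]
      exact Finset.mem_filter.mpr ⟨hmem, hrej⟩
  exact hnot (key T le_rfl)
end

section
/- In the polygamous Gale-Shapley setting with lying women all of whom are weakly better-off: if no woman in L is (strictly) harmed then all women are weakly better-off and every man has gained only worse matches; i.e., if a man m has not gained only worse matches, a contradiction arises via an infinite strictly-decreasing sequence of rejection nights in the original run. -/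
namespace GS

/-- A polygamous (college-admissions style) instance with `nw` women and `nm` men.
Each person `p` has a quota `q p` of spouses sought, and a strict preference
ranking of the opposite side (`lower rank = more preferred`). -/
structure PolyInstance (nw nm : ℕ) where
  qw : Fin nw → ℕ
  qm : Fin nm → ℕ
  mpref : Fin nm → Fin nw → ℕ
  wpref : Fin nw → Fin nm → ℕ
  mprefInj : ∀ m, Function.Injective (mpref m)
  wprefInj : ∀ w, Function.Injective (wpref w)

variable {nw nm : ℕ}

/-- Given the current state `avail m` (women who have not yet rejected man `m`),
man `m` proposes tonight to his `qm m` most-preferred available women (or to all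
available women if fewer remain). -/
def pproposals (P : PolyInstance nw nm) (avail : Fin nm → Finset (Fin nw))
    (m : Fin nm) : Finset (Fin nw) := topk (P.mpref m) (P.qm m) (avail m)

/-- The men proposing to woman `w` tonight. -/
def pproposersOf (P : PolyInstance nw nm) (avail : Fin nm → Finset (Fin nw))
    (w : Fin nw) : Finset (Fin nm) :=
  Finset.univ.filter fun m => w ∈ pproposals P avail m

/-- The men rejected by woman `w` tonight: all of tonight's proposers except her
`qw w` most-preferred ones. -/
def prejectedBy (P : PolyInstance nw nm) (avail : Fin nm → Finset (Fin nw))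
    (w : Fin nw) : Finset (Fin nm) :=
  pproposersOf P avail w \ topk (P.wpref w) (P.qw w) (pproposersOf P avail w)

/-- One night of the men-proposing polygamous deferred-acceptance algorithm. -/
def pstep (P : PolyInstance nw nm) (avail : Fin nm → Finset (Fin nw)) :
    Fin nm → Finset (Fin nw) :=
  fun m => (avail m).filter fun w => m ∉ prejectedBy P avail w

/-- The state (women who have not yet rejected each man) at the start of night `t`. -/
def pnights (P : PolyInstance nw nm) (t : ℕ) : Fin nm → Finset (Fin nw) :=
  (pstep P)^[t] (fun _ => Finset.univ)

/-- The algorithm has terminated by night `T`: no man is rejected on night `T`. -/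
def PStopped (P : PolyInstance nw nm) (T : ℕ) : Prop :=
  pstep P (pnights P T) = pnights P T

/-- The set of (woman, man) pairs `μ` is exactly the set of couples serenading on
night `T`. -/
def PMatchesAt (P : PolyInstance nw nm) (T : ℕ) (μ : Finset (Fin nw × Fin nm)) :
    Prop := ∀ w m, (w, m) ∈ μ ↔ w ∈ pproposals P (pnights P T) m

/-- `μ` is the outcome of the men-proposing polygamous deferred-acceptance
algorithm on instance `P`. -/
def IsPolyGSMatching (P : PolyInstance nw nm) (μ : Finset (Fin nw × Fin nm)) :
    Prop := ∃ T, PStopped P T ∧ PMatchesAt P T μ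

/-- The set of men matched with woman `w` under the matching `μ`. -/
def matchedMen (μ : Finset (Fin nw × Fin nm)) (w : Fin nw) : Finset (Fin nm) :=
  (μ.filter fun p => p.1 = w).image Prod.snd

/-- The set of women matched with man `m` under the matching `μ`. -/
def matchedWomen (μ : Finset (Fin nw × Fin nm)) (m : Fin nm) : Finset (Fin nw) :=
  (μ.filter fun p => p.2 = m).image Prod.fst

/-- The ranks of the members of `S`, sorted increasingly (i.e. from most preferred
to least preferred). -/
def rankList {α : Type*} [DecidableEq α] (rank : α → ℕ) (S : Finset α) : List ℕ :=
  (S.image rank).sort (· ≤ ·)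

/-- Woman `w` is weakly better-off under the matching `N` than under `O`
(judged by her true ranking `P.wpref w`): for each `i`, she does not prefer her
`i`-th best partner under `O` to her `i`-th best partner under `N`. -/
def WeaklyBetterOff (P : PolyInstance nw nm) (O N : Finset (Fin nw × Fin nm))
    (w : Fin nw) : Prop :=
  ∀ i, (rankList (P.wpref w) (matchedMen N w)).getD i 0
      ≤ (rankList (P.wpref w) (matchedMen O w)).getD i 0

/-- Man `m` has gained only worse matches: he prefers every member of `O(m)` to
every member of `N(m) \ O(m)`. -/
def GainedOnlyWorse (P : PolyInstance nw nm) (O N : Finset (Fin nw × Fin nm))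
    (m : Fin nm) : Prop :=
  ∀ w ∈ matchedWomen O m, ∀ w' ∈ matchedWomen N m, w' ∉ matchedWomen O m →
    P.mpref m w < P.mpref m w'

/-- The instance in which the women in `L` replace their true preference rankings
by the false rankings `f`, everyone else being truthful. -/
def polyLiarInstance (P : PolyInstance nw nm) (L : Finset (Fin nw))
    (f : Fin nw → Fin nm → ℕ) (hf : ∀ w, Function.Injective (f w)) :
    PolyInstance nw nm where
  qw := P.qw
  qm := P.qm
  mpref := P.mpref
  wpref := fun w => if w ∈ L then f w else P.wpref w
  mprefInj := P.mprefInj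
  wprefInj := fun w => by split_ifs; exacts [hf w, P.wprefInj w]


end GS

namespace GS

section TopkLemmas
variable {α : Type*} [DecidableEq α] {rank : α → ℕ} {k : ℕ} {S S' : Finset α} {a b : α}

lemma topk_subset : topk rank k S ⊆ S := Finset.filter_subset _ _

lemma mem_topk : a ∈ topk rank k S ↔ a ∈ S ∧ (S.filter fun b => rank b < rank a).card < k :=
  Finset.mem_filter

lemma mem_topk_of_subset (hS : S' ⊆ S) (ha' : a ∈ S') (ha : a ∈ topk rank k S) :
    a ∈ topk rank k S' := by
  rw [mem_topk] at ha ⊢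
  exact ⟨ha', lt_of_le_of_lt (Finset.card_le_card (Finset.filter_subset_filter _ hS)) ha.2⟩

lemma mem_topk_of_lt (ha : a ∈ topk rank k S) (hb : b ∈ S) (hlt : rank b < rank a) :
    b ∈ topk rank k S := by
  rw [mem_topk] at ha ⊢
  refine ⟨hb, lt_of_le_of_lt (Finset.card_le_card fun c hc => ?_) ha.2⟩
  rw [Finset.mem_filter] at hc ⊢
  exact ⟨hc.1, hc.2.trans hlt⟩

lemma topk_lt (hinj : Function.Injective rank) (ha : a ∈ topk rank k S) (hb : b ∈ S)
    (hnb : b ∉ topk rank k S) : rank a < rank b := by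
  rcases lt_trichotomy (rank a) (rank b) with h | h | h
  · exact h
  · exact absurd (hinj h ▸ ha) hnb
  · exact absurd (mem_topk_of_lt ha hb h) hnb

lemma card_topk (hinj : Function.Injective rank) :
    (topk rank k S).card = min k S.card := by
  classical
  set g : α → ℕ := fun a => (S.filter fun b => rank b < rank a).card with hg
  have hmono : ∀ a ∈ S, ∀ b ∈ S, rank a < rank b → g a < g b := by
    intro a ha b hb hab
    apply Finset.card_lt_card
    constructor
    · intro c hc
      rw [Finset.mem_filter] at hc ⊢
      exact ⟨hc.1, hc.2.trans hab⟩
    · intro hsub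
      have : a ∈ S.filter fun c => rank c < rank a := hsub (Finset.mem_filter.2 ⟨ha, hab⟩)
      simp at this
  have hinjOn : Set.InjOn g S := by
    intro a ha b hb hgab
    by_contra hne
    rcases lt_or_gt_of_ne (fun h => hne (hinj h)) with h | h
    · exact absurd hgab (Nat.ne_of_lt (hmono a ha b hb h))
    · exact absurd hgab.symm (Nat.ne_of_lt (hmono b hb a ha h))
  have himg : S.image g = Finset.range S.card := by
    apply Finset.eq_of_subset_of_card_le
    · intro x hx
      rw [Finset.mem_image] at hx
      obtain ⟨a, ha, rfl⟩ := hx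
      rw [Finset.mem_range]
      calc g a ≤ (S.erase a).card := by
            apply Finset.card_le_card
            intro c hc
            rw [Finset.mem_filter] at hc
            refine Finset.mem_erase.2 ⟨fun h => ?_, hc.1⟩
            exact absurd (h ▸ hc.2) (lt_irrefl _)
        _ < S.card := Finset.card_erase_lt_of_mem ha
    · rw [Finset.card_range, Finset.card_image_of_injOn hinjOn]
  have h1 : topk rank k S = S.filter fun a => g a < k := rfl
  have h2 : (topk rank k S).card = ((S.image g).filter fun x => x < k).card := by
    rw [Finset.filter_image, h1]
    exact (Finset.card_image_of_injOn (hinjOn.mono (Finset.filter_subset _ _))).symm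
  rw [h2, himg]
  have : (Finset.range S.card).filter (fun x => x < k) = Finset.range (min k S.card) := by
    ext x
    simp only [Finset.mem_filter, Finset.mem_range, lt_min_iff]
    tauto
  rw [this, Finset.card_range]

lemma not_mem_topk_full (hinj : Function.Injective rank) (hb : b ∈ S)
    (hnb : b ∉ topk rank k S) :
    (topk rank k S).card = k ∧ ∀ a ∈ topk rank k S, rank a < rank b := by
  refine ⟨?_, fun a ha => topk_lt hinj ha hb hnb⟩
  have hk : k ≤ (S.filter fun c => rank c < rank b).card := by
    by_contra h
    exact hnb (mem_topk.2 ⟨hb, lt_of_not_ge h⟩)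
  have hcS : k < S.card := by
    calc k ≤ (S.filter fun c => rank c < rank b).card := hk
      _ ≤ (S.erase b).card := by
          apply Finset.card_le_card
          intro c hc
          rw [Finset.mem_filter] at hc
          exact Finset.mem_erase.2 ⟨fun h => absurd (h ▸ hc.2) (lt_irrefl _), hc.1⟩
      _ < S.card := Finset.card_erase_lt_of_mem hb
  rw [card_topk hinj]
  omega

lemma card_topk_le (hinj : Function.Injective rank) : (topk rank k S).card ≤ k := by
  rw [card_topk hinj]; omega

end TopkLemmas

end GS

namespace GS

section AlgoLemmas
variable {nw nm : ℕ} {P : PolyInstance nw nm} {avail : Fin nm → Finset (Fin nw)}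
  {m : Fin nm} {w : Fin nw} {t s T : ℕ} {μ : Finset (Fin nw × Fin nm)}

lemma pproposals_subset : pproposals P avail m ⊆ avail m := topk_subset

lemma mem_proposersOf_s15 : m ∈ pproposersOf P avail w ↔ w ∈ pproposals P avail m := by
  simp [pproposersOf]

lemma prejectedBy_subset : prejectedBy P avail w ⊆ pproposersOf P avail w :=
  Finset.sdiff_subset

lemma pnights_succ (P : PolyInstance nw nm) (t : ℕ) :
    pnights P (t + 1) = pstep P (pnights P t) :=
  Function.iterate_succ_apply' _ _ _

lemma mem_pnights_succ :
    w ∈ pnights P (t + 1) m ↔ w ∈ pnights P t m ∧ m ∉ prejectedBy P (pnights P t) w := by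
  rw [pnights_succ]
  simp [pstep]

lemma pnights_succ_subset : pnights P (t + 1) m ⊆ pnights P t m := fun w hw =>
  (mem_pnights_succ.1 hw).1

lemma mem_pnights :
    w ∈ pnights P t m ↔ ∀ s < t, m ∉ prejectedBy P (pnights P s) w := by
  induction t with
  | zero => simp [pnights]
  | succ t ih =>
    rw [mem_pnights_succ, ih]
    constructor
    · rintro ⟨h1, h2⟩ s hs
      rcases Nat.lt_succ_iff_lt_or_eq.1 hs with h | rfl
      · exact h1 s h
      · exact h2
    · intro h
      exact ⟨fun s hs => h s (hs.trans (Nat.lt_succ_self t)), h t (Nat.lt_succ_self t)⟩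

lemma pnights_eq_of_stopped (hT : PStopped P T) (h : T ≤ s) :
    pnights P s = pnights P T := by
  induction s, h using Nat.le_induction with
  | base => rfl
  | succ s hs ih => rw [pnights_succ, ih]; exact hT

lemma not_rejected_of_stopped (hT : PStopped P T) :
    m ∉ prejectedBy P (pnights P T) w := by
  intro hm
  have hprop : m ∈ pproposersOf P (pnights P T) w := prejectedBy_subset hm
  have hw : w ∈ pproposals P (pnights P T) m := mem_proposersOf_s15.1 hprop
  have hav : w ∈ pnights P T m := pproposals_subset hw
  have heq : pstep P (pnights P T) m = pnights P T m := by rw [hT]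
  rw [← heq] at hav
  simp only [pstep, Finset.mem_filter] at hav
  exact hav.2 hm

lemma proposers_stopped (hT : PStopped P T) :
    pproposersOf P (pnights P T) w
      = topk (P.wpref w) (P.qw w) (pproposersOf P (pnights P T) w) := by
  apply Finset.Subset.antisymm _ topk_subset
  intro m hm
  by_contra hnm
  exact not_rejected_of_stopped hT (Finset.mem_sdiff.2 ⟨hm, hnm⟩)

lemma proposer_persist (h : m ∈ pproposersOf P (pnights P t) w)
    (hnr : m ∉ prejectedBy P (pnights P t) w) :
    m ∈ pproposersOf P (pnights P (t + 1)) w := by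
  rw [mem_proposersOf_s15] at h ⊢
  have hav : w ∈ pnights P (t + 1) m :=
    mem_pnights_succ.2 ⟨pproposals_subset h, hnr⟩
  exact mem_topk_of_subset pnights_succ_subset hav h

lemma mem_matchedMen : m ∈ matchedMen μ w ↔ (w, m) ∈ μ := by
  simp only [matchedMen, Finset.mem_image, Finset.mem_filter]
  constructor
  · rintro ⟨⟨a, b⟩, ⟨hp, rfl⟩, rfl⟩
    exact hp
  · intro h
    exact ⟨(w, m), ⟨h, rfl⟩, rfl⟩

lemma mem_matchedWomen : w ∈ matchedWomen μ m ↔ (w, m) ∈ μ := by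
  simp only [matchedWomen, Finset.mem_image, Finset.mem_filter]
  constructor
  · rintro ⟨⟨a, b⟩, ⟨hp, rfl⟩, rfl⟩
    exact hp
  · intro h
    exact ⟨(w, m), ⟨h, rfl⟩, rfl⟩

lemma matchedMen_eq (hμ : PMatchesAt P T μ) :
    matchedMen μ w = pproposersOf P (pnights P T) w := by
  ext m
  rw [mem_matchedMen, hμ w m, mem_proposersOf_s15]

lemma matchedWomen_eq (hμ : PMatchesAt P T μ) :
    matchedWomen μ m = pproposals P (pnights P T) m := by
  ext w
  rw [mem_matchedWomen, hμ w m]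

lemma card_matchedMen_le (hT : PStopped P T) (hμ : PMatchesAt P T μ) :
    (matchedMen μ w).card ≤ P.qw w := by
  rw [matchedMen_eq hμ, proposers_stopped hT]
  exact card_topk_le (P.wprefInj w)

lemma card_matchedWomen_le (hT : PStopped P T) (hμ : PMatchesAt P T μ) :
    (matchedWomen μ m).card ≤ P.qm m := by
  rw [matchedWomen_eq hμ]
  exact card_topk_le (P.mprefInj m)

/-- If `w` rejects `m` at some night, then in the final matching `w` is matched
to a full quota of men, all of whom she prefers to `m`. -/
lemma rejected_final (hT : PStopped P T) (hμ : PMatchesAt P T μ)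
    (hrej : m ∈ prejectedBy P (pnights P t) w) :
    (matchedMen μ w).card = P.qw w ∧
      ∀ m' ∈ matchedMen μ w, P.wpref w m' < P.wpref w m := by
  have ht : t < T := by
    by_contra h
    rw [pnights_eq_of_stopped hT (le_of_not_gt h)] at hrej
    exact not_rejected_of_stopped hT hrej
  set B : ℕ → Finset (Fin nm) := fun s =>
    (pproposersOf P (pnights P s) w).filter fun m'' => P.wpref w m'' < P.wpref w m with hB
  have hmrej : ∀ s, t < s → m ∉ pproposersOf P (pnights P s) w := by
    intro s hs hm
    have : w ∈ pnights P s m := pproposals_subset (mem_proposersOf_s15.1 hm)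
    exact (mem_pnights.1 this) t hs hrej
  have hrej' := Finset.mem_sdiff.1 hrej
  obtain ⟨hHcard, hHlt⟩ := not_mem_topk_full (P.wprefInj w) hrej'.1 hrej'.2
  have key : ∀ s, t < s → P.qw w ≤ (B s).card := by
    intro s hs
    induction s with
    | zero => omega
    | succ s ih =>
      rcases Nat.lt_succ_iff_lt_or_eq.1 hs with h | rfl
      · -- inductive step: from night s to s+1
        have hBs := ih h
        have hheld : topk (P.wpref w) (P.qw w) (pproposersOf P (pnights P s) w) ⊆ B s := by
          intro h' hh'
          have hh'p : h' ∈ pproposersOf P (pnights P s) w := topk_subset hh'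
          rw [hB, Finset.mem_filter]
          refine ⟨hh'p, ?_⟩
          by_contra hge
          have hne : P.wpref w m ≠ P.wpref w h' := by
            intro heq
            exact hmrej s h ((P.wprefInj w heq) ▸ hh'p)
          have hlt : P.wpref w m < P.wpref w h' := by omega
          have : P.qw w ≤ ((pproposersOf P (pnights P s) w).filter
              fun c => P.wpref w c < P.wpref w h').card := by
            refine hBs.trans (Finset.card_le_card ?_)
            intro c hc
            rw [hB, Finset.mem_filter] at hc
            exact Finset.mem_filter.2 ⟨hc.1, hc.2.trans hlt⟩
          rw [mem_topk] at hh'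
          omega
        have hHsub : topk (P.wpref w) (P.qw w) (pproposersOf P (pnights P s) w) ⊆ B (s + 1) := by
          intro h' hh'
          have hh'B := hheld hh'
          rw [hB, Finset.mem_filter] at hh'B ⊢
          refine ⟨proposer_persist hh'B.1 ?_, hh'B.2⟩
          intro hr
          exact (Finset.mem_sdiff.1 hr).2 hh'
        calc P.qw w = min (P.qw w) (pproposersOf P (pnights P s) w).card := by
              have : P.qw w ≤ (pproposersOf P (pnights P s) w).card :=
                hBs.trans (Finset.card_le_card (Finset.filter_subset _ _))
              omega
          _ = (topk (P.wpref w) (P.qw w) (pproposersOf P (pnights P s) w)).card :=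
              (card_topk (P.wprefInj w)).symm
          _ ≤ (B (s + 1)).card := Finset.card_le_card hHsub
      · -- base case s = t
        have hHsub : topk (P.wpref w) (P.qw w) (pproposersOf P (pnights P t) w)
            ⊆ B (t + 1) := by
          intro h' hh'
          rw [hB, Finset.mem_filter]
          refine ⟨proposer_persist (topk_subset hh') ?_, hHlt h' hh'⟩
          intro hr
          exact (Finset.mem_sdiff.1 hr).2 hh'
        rw [← hHcard]
        exact Finset.card_le_card hHsub
  have hBT := key T ht
  have hmm := matchedMen_eq (w := w) hμ
  have hsub : B T ⊆ matchedMen μ w := by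
    rw [hmm]; exact Finset.filter_subset _ _
  have hcard : (matchedMen μ w).card ≤ P.qw w := card_matchedMen_le hT hμ
  have heq : B T = matchedMen μ w :=
    Finset.eq_of_subset_of_card_le hsub (hcard.trans hBT)
  constructor
  · rw [heq] at hBT; omega
  · intro m' hm'
    rw [← heq, hB, Finset.mem_filter] at hm'
    exact hm'.2

end AlgoLemmas

end GS

namespace GS

section RankListLemmas
variable {α : Type*} [DecidableEq α] {rank : α → ℕ} {S So Sn : Finset α} {r : ℕ}

lemma rankList_length (hinj : Function.Injective rank) (S : Finset α) :
    (rankList rank S).length = S.card := by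
  rw [rankList, Finset.length_sort, Finset.card_image_of_injective _ hinj]

lemma rankList_sorted (S : Finset α) : (rankList rank S).Pairwise (· < ·) :=
  (Finset.sortedLT_sort _).pairwise

lemma mem_rankList : r ∈ rankList rank S ↔ r ∈ S.image rank :=
  Finset.mem_sort _

/-- Bridge between Finset-filter cardinalities and list-filter lengths. -/
lemma card_filter_eq_length_filter (hinj : Function.Injective rank) (p : ℕ → Bool) :
    (S.filter fun a => p (rank a)).card = ((rankList rank S).filter p).length := by
  have h1 : (S.filter fun a => p (rank a)).card
      = ((S.image rank).filter fun x => p x).card := by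
    rw [Finset.filter_image]
    exact (Finset.card_image_of_injective _ hinj).symm
  have hnd : ((rankList rank S).filter p).Nodup :=
    (Finset.sort_nodup _ _).filter _
  have h2 : ((rankList rank S).filter p).toFinset
      = (S.image rank).filter fun x => p x := by
    rw [List.toFinset_filter, rankList, Finset.sort_toFinset]
  rw [h1, ← h2, List.toFinset_card_of_nodup hnd]

private lemma sorted_filter_lt_length : ∀ (l : List ℕ), l.Pairwise (· < ·) →
    ∀ i (h : i < l.length), (l.filter fun x => decide (x < l.get ⟨i, h⟩)).length = i := by
  intro l
  induction l with
  | nil => intro _ i h; simp at h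
  | cons a l ih =>
    intro hs i h
    have hal : ∀ b ∈ l, a < b := fun b hb => List.rel_of_pairwise_cons hs hb
    cases i with
    | zero =>
      show (List.filter (fun x => decide (x < a)) (a :: l)).length = 0
      have hnil : List.filter (fun x => decide (x < a)) (a :: l) = [] := by
        rw [List.filter_eq_nil_iff]
        intro b hb
        rcases List.mem_cons.1 hb with rfl | hb
        · simp
        · simpa using le_of_lt (hal b hb)
      rw [hnil]
      rfl
    | succ i =>
      have hlen : i < l.length := Nat.succ_lt_succ_iff.1 h
      have hget : (a :: l).get ⟨i + 1, h⟩ = l.get ⟨i, hlen⟩ := rfl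
      rw [hget, List.filter_cons]
      have hmem : l.get ⟨i, hlen⟩ ∈ l := by
        rw [List.get_eq_getElem]; exact List.getElem_mem hlen
      have ha : a < l.get ⟨i, hlen⟩ := hal _ hmem
      simp only [decide_eq_true_eq, if_pos ha, List.length_cons]
      rw [ih hs.of_cons i hlen]

private lemma sorted_filter_lt_length_ge : ∀ (l : List ℕ), l.Pairwise (· < ·) →
    ∀ i (h : i < l.length) (r : ℕ), l.get ⟨i, h⟩ < r →
      i + 1 ≤ (l.filter fun x => decide (x < r)).length := by
  intro l
  induction l with
  | nil => intro _ i h; simp at h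
  | cons a l ih =>
    intro hs i h r hr
    have hal : ∀ b ∈ l, a < b := fun b hb => List.rel_of_pairwise_cons hs hb
    cases i with
    | zero =>
      have : a < r := hr
      rw [List.filter_cons, if_pos (by simpa using this)]
      simp
    | succ i =>
      have hlen : i < l.length := Nat.succ_lt_succ_iff.1 h
      have hget : (a :: l).get ⟨i + 1, h⟩ = l.get ⟨i, hlen⟩ := rfl
      rw [hget] at hr
      have hmem : l.get ⟨i, hlen⟩ ∈ l := by
        rw [List.get_eq_getElem]; exact List.getElem_mem hlen
      have ha : a < r := lt_trans (hal _ hmem) hr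
      rw [List.filter_cons, if_pos (by simpa using ha)]
      simpa using Nat.succ_le_succ (ih hs.of_cons i hlen r hr)

/-- If the `i`-th best rank in `So` beats the `i`-th best rank in `Sn`,
there is a member of `So` missing from `Sn` better than the `i`-th rank of `Sn`. -/
lemma exists_unmatched_better (hinj : Function.Injective rank)
    {i : ℕ} (hio : i < (rankList rank So).length) (hin : i < (rankList rank Sn).length)
    (hlt : (rankList rank So).getD i 0 < (rankList rank Sn).getD i 0) :
    ∃ a ∈ So, a ∉ Sn ∧ rank a < (rankList rank Sn).getD i 0 := by
  set r := (rankList rank Sn).getD i 0 with hrdef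
  have hgetn : (rankList rank Sn).get ⟨i, hin⟩ = r := (List.getD_eq_get _ _ ⟨i, hin⟩).symm
  have hgeto : (rankList rank So).get ⟨i, hio⟩ = (rankList rank So).getD i 0 :=
    (List.getD_eq_get _ _ ⟨i, hio⟩).symm
  have hcount_n : ((Sn.filter fun a => rank a < r)).card = i := by
    rw [show (Sn.filter fun a => rank a < r) = Sn.filter fun a => decide (rank a < r) = true by
      simp]
    rw [card_filter_eq_length_filter hinj (fun x => decide (x < r))]
    rw [← hgetn]
    exact sorted_filter_lt_length _ (rankList_sorted Sn) i hin
  have hcount_o : i + 1 ≤ ((So.filter fun a => rank a < r)).card := by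
    rw [show (So.filter fun a => rank a < r) = So.filter fun a => decide (rank a < r) = true by
      simp]
    rw [card_filter_eq_length_filter hinj (fun x => decide (x < r))]
    exact sorted_filter_lt_length_ge _ (rankList_sorted So) i hio r (by rw [hgeto]; exact hlt)
  have hns : ¬ (So.filter fun a => rank a < r) ⊆ (Sn.filter fun a => rank a < r) := by
    intro hsub
    have := Finset.card_le_card hsub
    omega
  obtain ⟨a, ha, hna⟩ := Finset.not_subset.1 hns
  rw [Finset.mem_filter] at ha
  refine ⟨a, ha.1, fun hmem => hna (Finset.mem_filter.2 ⟨hmem, ha.2⟩), ha.2⟩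

end RankListLemmas

end GS

namespace GS

section MainLemmas
variable {nw nm : ℕ} {P : PolyInstance nw nm} {m : Fin nm} {w : Fin nw} {t T : ℕ}
  {μ : Finset (Fin nw × Fin nm)}

/-- If `w` is available to `m` at the end but unmatched with him, then `m` is matched
to a full quota of women, all of whom he prefers to `w`. -/
lemma man_full (hT : PStopped P T) (hμ : PMatchesAt P T μ)
    (hnr : ∀ t, m ∉ prejectedBy P (pnights P t) w) (hnm : w ∉ matchedWomen μ m) :
    (matchedWomen μ m).card = P.qm m ∧
      ∀ w' ∈ matchedWomen μ m, P.mpref m w' < P.mpref m w := by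
  have hav : w ∈ pnights P T m := mem_pnights.2 fun s _ => hnr s
  rw [matchedWomen_eq hμ] at hnm ⊢
  exact not_mem_topk_full (P.mprefInj m) hav hnm

/-- If all of `w`'s `O`-partners are strictly preferred (by `w`) to some `N`-partner
of hers, and she has a full quota in `O`, then she is not weakly better-off. -/
lemma not_weaklyBetterOff (P : PolyInstance nw nm) {O N : Finset (Fin nw × Fin nm)}
    {w : Fin nw} {m : Fin nm} (hm : m ∈ matchedMen N w)
    (hcard : (matchedMen O w).card = P.qw w)
    (hlt : ∀ m' ∈ matchedMen O w, P.wpref w m' < P.wpref w m)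
    (hNle : (matchedMen N w).card ≤ P.qw w) :
    ¬ WeaklyBetterOff P O N w := by
  intro hwbo
  set ln := rankList (P.wpref w) (matchedMen N w) with hln
  set lo := rankList (P.wpref w) (matchedMen O w) with hlo
  have hρ : P.wpref w m ∈ ln := mem_rankList.2 (Finset.mem_image.2 ⟨m, hm, rfl⟩)
  set j := ln.idxOf (P.wpref w m) with hj
  have hjlt : j < ln.length := List.idxOf_lt_length_iff.2 hρ
  have hgd : ln.getD j 0 = P.wpref w m := by
    rw [List.getD_eq_get _ _ ⟨j, hjlt⟩, List.get_eq_getElem]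
    exact List.getElem_idxOf hjlt
  have hlen_n : ln.length = (matchedMen N w).card := rankList_length (P.wprefInj w) _
  have hlen_o : lo.length = (matchedMen O w).card := rankList_length (P.wprefInj w) _
  have hjo : j < lo.length := by omega
  have hmem : lo.getD j 0 ∈ lo := by
    rw [List.getD_eq_get _ _ ⟨j, hjo⟩, List.get_eq_getElem]
    exact List.getElem_mem hjo
  obtain ⟨m', hm', heq⟩ := Finset.mem_image.1 (mem_rankList.1 hmem)
  have h1 := hwbo j
  rw [← hln, ← hlo, hgd, ← heq] at h1
  have h2 := hlt m' hm'
  omega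

lemma sum_card_matchedMen (μ : Finset (Fin nw × Fin nm)) :
    ∑ w, (matchedMen μ w).card = μ.card := by
  have h1 : ∀ w : Fin nw, (matchedMen μ w).card = (μ.filter fun p => p.1 = w).card := by
    intro w
    apply Finset.card_image_of_injOn
    intro p hp q hq hpq
    rw [Finset.mem_coe, Finset.mem_filter] at hp hq
    exact Prod.ext (hp.2.trans hq.2.symm) hpq
  rw [Finset.sum_congr rfl fun w _ => h1 w]
  exact (Finset.card_eq_sum_card_fiberwise fun p _ => Finset.mem_univ p.1).symm

lemma sum_card_matchedWomen (μ : Finset (Fin nw × Fin nm)) :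
    ∑ m, (matchedWomen μ m).card = μ.card := by
  have h1 : ∀ m : Fin nm, (matchedWomen μ m).card = (μ.filter fun p => p.2 = m).card := by
    intro m
    apply Finset.card_image_of_injOn
    intro p hp q hq hpq
    rw [Finset.mem_coe, Finset.mem_filter] at hp hq
    exact Prod.ext hpq (hp.2.trans hq.2.symm)
  rw [Finset.sum_congr rfl fun m _ => h1 m]
  exact (Finset.card_eq_sum_card_fiberwise fun p _ => Finset.mem_univ p.2).symm

end MainLemmas

end GS

open GS in
/-- The polygamous theorem: if all lying women are weakly better-off, then all
women are weakly better-off and every man has gained only worse matches. -/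
theorem poly_sisterhood (nw nm : ℕ)
    (P : GS.PolyInstance nw nm) (hq : ∑ w, P.qw w = ∑ m, P.qm m)
    (L : Finset (Fin nw)) (f : Fin nw → Fin nm → ℕ)
    (hf : ∀ w, Function.Injective (f w))
    (O N : Finset (Fin nw × Fin nm))
    (hO : IsPolyGSMatching P O)
    (hN : IsPolyGSMatching (polyLiarInstance P L f hf) N)
    (hliars : ∀ w ∈ L, WeaklyBetterOff P O N w) :
    (∀ w, WeaklyBetterOff P O N w) ∧ (∀ m, GainedOnlyWorse P O N m) := by
  classical
  obtain ⟨S, hSstop, hSmat⟩ := hO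
  obtain ⟨T, hTstop, hTmat⟩ := hN
  set Q := polyLiarInstance P L f hf with hQ
  have hQqw : Q.qw = P.qw := rfl
  have hQqm : Q.qm = P.qm := rfl
  have hQm : Q.mpref = P.mpref := rfl
  have hQw : ∀ w ∉ L, Q.wpref w = P.wpref w := by
    intro w hw
    simp [hQ, polyLiarInstance, hw]
  -- Part I: no man matched in N to a woman who ever rejected him in the run of O.
  have noE : ∀ t (m : Fin nm) (w' : Fin nw), m ∈ matchedMen N w' →
      m ∉ prejectedBy P (pnights P t) w' := by
    intro t
    induction t using Nat.strong_induction_on with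
    | _ t IH =>
      intro m w' hmN hrej
      obtain ⟨hOcard, hOlt⟩ := rejected_final hSstop hSmat hrej
      have hNle : (matchedMen N w').card ≤ P.qw w' := by
        have := card_matchedMen_le (w := w') hTstop hTmat
        rwa [hQqw] at this
      have hharm : ¬ WeaklyBetterOff P O N w' := not_weaklyBetterOff P hmN hOcard hOlt hNle
      have hw'L : w' ∉ L := fun h => hharm (hliars w' h)
      have hwpref : Q.wpref w' = P.wpref w' := hQw w' hw'L
      have hrej' := Finset.mem_sdiff.1 hrej
      obtain ⟨hHcard, hHlt⟩ := not_mem_topk_full (P.wprefInj w') hrej'.1 hrej'.2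
      set H := topk (P.wpref w') (P.qw w') (pproposersOf P (pnights P t) w') with hH
      have hHN : ¬ H ⊆ matchedMen N w' := by
        intro hsub
        have hins : insert m H ⊆ matchedMen N w' := by
          intro x hx
          rcases Finset.mem_insert.1 hx with rfl | hx
          exacts [hmN, hsub hx]
        have hcard := Finset.card_le_card hins
        rw [Finset.card_insert_of_notMem hrej'.2, hHcard] at hcard
        omega
      obtain ⟨mh, hmhH, hmhN⟩ := Finset.not_subset.1 hHN
      have hnr : ∀ u, mh ∉ prejectedBy Q (pnights Q u) w' := by
        intro u hrej2
        obtain ⟨_, hl⟩ := rejected_final hTstop hTmat hrej2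
        have h1 := hl m hmN
        rw [hwpref] at h1
        have h2 := hHlt mh hmhH
        omega
      have hw'marr : w' ∉ matchedWomen N mh := by
        rw [mem_matchedWomen]
        rw [mem_matchedMen] at hmhN
        exact hmhN
      obtain ⟨hMcard, hMlt⟩ := man_full hTstop hTmat hnr hw'marr
      rw [hQqm] at hMcard
      rw [hQm] at hMlt
      by_cases hall : matchedWomen N mh ⊆ pnights P t mh
      · have hprop : w' ∈ pproposals P (pnights P t) mh :=
          mem_proposersOf_s15.1 (topk_subset hmhH)
        have hcnt := (mem_topk.1 hprop).2
        have hsub2 : matchedWomen N mh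
            ⊆ (pnights P t mh).filter fun c => P.mpref mh c < P.mpref mh w' := by
          intro c hc
          exact Finset.mem_filter.2 ⟨hall hc, hMlt c hc⟩
        have := Finset.card_le_card hsub2
        omega
      · obtain ⟨w'', hw''N, hw''av⟩ := Finset.not_subset.1 hall
        obtain ⟨t'', ht'', hrej3⟩ : ∃ s < t, mh ∈ prejectedBy P (pnights P s) w'' := by
          by_contra hno
          push_neg at hno
          exact hw''av (mem_pnights.2 hno)
        exact IH t'' ht'' mh w'' (mem_matchedMen.2 (mem_matchedWomen.1 hw''N)) hrej3
  -- Part II: every man gained only worse matches.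
  have hGOW : ∀ m, GainedOnlyWorse P O N m := by
    intro m w₁ hw₁ w' hw' hw'O
    by_contra hnot
    have hne : P.mpref m w' ≠ P.mpref m w₁ := by
      intro h
      exact hw'O ((P.mprefInj m h) ▸ hw₁)
    have hlt : P.mpref m w' < P.mpref m w₁ := by omega
    have hw₁top : w₁ ∈ pproposals P (pnights P S) m := by
      rw [matchedWomen_eq hSmat] at hw₁
      exact hw₁
    have hw'nav : w' ∉ pnights P S m := by
      intro hav
      exact hw'O (by rw [matchedWomen_eq hSmat]; exact mem_topk_of_lt hw₁top hav hlt)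
    obtain ⟨s, _, hrej⟩ : ∃ s < S, m ∈ prejectedBy P (pnights P s) w' := by
      by_contra hno
      push_neg at hno
      exact hw'nav (mem_pnights.2 hno)
    exact noE s m w' (mem_matchedMen.2 (mem_matchedWomen.1 hw')) hrej
  -- Part III: every man has at most as many partners in N as in O.
  have hManCard : ∀ m, (matchedWomen N m).card ≤ (matchedWomen O m).card := by
    intro m
    by_cases hsub : matchedWomen N m ⊆ matchedWomen O m
    · exact Finset.card_le_card hsub
    · obtain ⟨w', hw'N, hw'O⟩ := Finset.not_subset.1 hsub
      have hnr : ∀ t, m ∉ prejectedBy P (pnights P t) w' :=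
        fun t => noE t m w' (mem_matchedMen.2 (mem_matchedWomen.1 hw'N))
      obtain ⟨hcard, _⟩ := man_full hSstop hSmat hnr hw'O
      rw [hcard]
      have := card_matchedWomen_le (m := m) hTstop hTmat
      rwa [hQqm] at this
  -- Part IV: every woman has at least as many partners in N as in O.
  have hWomanCard : ∀ w, (matchedMen O w).card ≤ (matchedMen N w).card := by
    intro w
    by_contra hlt
    push_neg at hlt
    have hOle : (matchedMen O w).card ≤ P.qw w := card_matchedMen_le hSstop hSmat
    have hnoNrej : ∀ u (m' : Fin nm), m' ∉ prejectedBy Q (pnights Q u) w := by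
      intro u m' hrej
      obtain ⟨hc, _⟩ := rejected_final hTstop hTmat hrej
      rw [hQqw] at hc
      omega
    have hnsub0 : ¬ matchedMen O w ⊆ matchedMen N w := by
      intro hsub
      have := Finset.card_le_card hsub
      omega
    obtain ⟨m', hm'O, hm'N⟩ := Finset.not_subset.1 hnsub0
    have hwnm : w ∉ matchedWomen N m' := by
      rw [mem_matchedWomen]
      rw [mem_matchedMen] at hm'N
      exact hm'N
    obtain ⟨hNm'card, hNm'lt⟩ := man_full hTstop hTmat (fun u => hnoNrej u m') hwnm
    rw [hQqm] at hNm'card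
    rw [hQm] at hNm'lt
    have hOm'ge : P.qm m' ≤ (matchedWomen O m').card := by
      rw [← hNm'card]
      exact hManCard m'
    have hOm'le := card_matchedWomen_le (m := m') hSstop hSmat
    have hwO : w ∈ matchedWomen O m' := mem_matchedWomen.2 (mem_matchedMen.1 hm'O)
    have hnsub : ¬ matchedWomen N m' ⊆ matchedWomen O m' := by
      intro hsub
      have heq := Finset.eq_of_subset_of_card_le hsub (by omega)
      rw [← heq] at hwO
      exact hwnm hwO
    obtain ⟨w₃, hw₃N, hw₃O⟩ := Finset.not_subset.1 hnsub
    have hnr3 : ∀ t, m' ∉ prejectedBy P (pnights P t) w₃ :=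
      fun t => noE t m' w₃ (mem_matchedMen.2 (mem_matchedWomen.1 hw₃N))
    obtain ⟨_, hOlt⟩ := man_full hSstop hSmat hnr3 hw₃O
    have h1 := hOlt w hwO
    have h2 := hNm'lt w₃ hw₃N
    omega
  -- Part V: hence every woman has exactly as many partners in N as in O.
  have hWeq : ∀ w, (matchedMen N w).card = (matchedMen O w).card := by
    by_contra hne
    push_neg at hne
    obtain ⟨w₀, hw₀⟩ := hne
    have hw₀lt : (matchedMen O w₀).card < (matchedMen N w₀).card :=
      lt_of_le_of_ne (hWomanCard w₀) (Ne.symm hw₀)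
    have hstrict : ∑ w, (matchedMen O w).card < ∑ w, (matchedMen N w).card :=
      Finset.sum_lt_sum (fun i _ => hWomanCard i) ⟨w₀, Finset.mem_univ _, hw₀lt⟩
    have hle : ∑ w, (matchedMen N w).card ≤ ∑ w, (matchedMen O w).card := by
      rw [sum_card_matchedMen, sum_card_matchedMen, ← sum_card_matchedWomen,
        ← sum_card_matchedWomen]
      exact Finset.sum_le_sum fun m _ => hManCard m
    omega
  -- Part VI: every woman is weakly better off.
  have hWBO : ∀ w, WeaklyBetterOff P O N w := by
    intro w
    by_contra hnot
    simp only [WeaklyBetterOff, not_forall, not_le] at hnot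
    obtain ⟨i, hi⟩ := hnot
    set ln := rankList (P.wpref w) (matchedMen N w) with hln
    set lo := rankList (P.wpref w) (matchedMen O w) with hlo
    have hin : i < ln.length := by
      by_contra h
      rw [List.getD_eq_default _ _ (le_of_not_gt h)] at hi
      omega
    have hlen : lo.length = ln.length := by
      rw [hln, hlo, rankList_length (P.wprefInj w), rankList_length (P.wprefInj w), hWeq w]
    have hio : i < lo.length := by omega
    have hi' : lo.getD i 0 < ln.getD i 0 := by rw [hln, hlo]; exact hi
    obtain ⟨mh, hmhO, hmhN, hmhlt⟩ :=
      exists_unmatched_better (P.wprefInj w) hio hin hi'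
    have hrmem : ln.getD i 0 ∈ ln := by
      rw [List.getD_eq_get _ _ ⟨i, hin⟩, List.get_eq_getElem]
      exact List.getElem_mem hin
    obtain ⟨mr, hmrN, hmr⟩ := Finset.mem_image.1 (mem_rankList.1 hrmem)
    have hwL : w ∉ L := by
      intro h
      have := (hliars w h) i
      rw [← hln, ← hlo] at this
      omega
    have hwpref := hQw w hwL
    have hnr : ∀ u, mh ∉ prejectedBy Q (pnights Q u) w := by
      intro u hrej
      obtain ⟨_, hl⟩ := rejected_final hTstop hTmat hrej
      have h1 := hl mr hmrN
      rw [hwpref] at h1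
      rw [hmr] at h1
      have h2 : P.wpref w mh < ln.getD i 0 := hmhlt
      omega
    have hwnm : w ∉ matchedWomen N mh := by
      rw [mem_matchedWomen]
      rw [mem_matchedMen] at hmhN
      exact hmhN
    obtain ⟨hNcard, hNlt⟩ := man_full hTstop hTmat hnr hwnm
    rw [hQqm] at hNcard
    rw [hQm] at hNlt
    have hwprop : w ∈ pproposals P (pnights P S) mh := by
      rw [← matchedWomen_eq hSmat]
      exact mem_matchedWomen.2 (mem_matchedMen.1 hmhO)
    by_cases hall : matchedWomen N mh ⊆ pnights P S mh
    · have hcnt := (mem_topk.1 hwprop).2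
      have hsub2 : matchedWomen N mh
          ⊆ (pnights P S mh).filter fun c => P.mpref mh c < P.mpref mh w :=
        fun c hc => Finset.mem_filter.2 ⟨hall hc, hNlt c hc⟩
      have := Finset.card_le_card hsub2
      omega
    · obtain ⟨w₃, hw₃N, hw₃av⟩ := Finset.not_subset.1 hall
      obtain ⟨s, _, hrej⟩ : ∃ s < S, mh ∈ prejectedBy P (pnights P s) w₃ := by
        by_contra hno
        push_neg at hno
        exact hw₃av (mem_pnights.2 hno)
      exact noE s mh w₃ (mem_matchedMen.2 (mem_matchedWomen.1 hw₃N)) hrej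
  exact ⟨hWBO, hGOW⟩
end

section
/- In the monogamous Gale-Shapley setting with exactly one lying woman, if the lying woman is strictly better-off and no woman is worse-off, then some innocent (truthful) woman is also strictly better-off. -/
open GS in
/-- With exactly one lying woman: if the liar is strictly better-off and no woman is
worse-off, then some innocent (truthful) woman is also strictly better-off. -/
theorem lone_liar_helps_some_innocent (n : ℕ) (I : GS.Instance n)
    (l : Fin n) (f : Fin n → Fin n → ℕ) (hf : ∀ w, Function.Injective (f w))
    (O N : Fin n ≃ Fin n)
    (hO : IsGSMatching I O) (hN : IsGSMatching (liarInstance I {l} f hf) N)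
    (hl : prefers (I.wpref l) (N.symm l) (O.symm l))
    (hnoworse : ∀ w, ¬ prefers (I.wpref w) (O.symm w) (N.symm w)) :
    ∃ w, w ≠ l ∧ prefers (I.wpref w) (N.symm w) (O.symm w) := by
  classical
  set m := N.symm l with hm
  refine ⟨O m, ?_, ?_⟩
  · intro h
    have : O.symm l = m := by rw [← h]; simp
    rw [this] at hl
    exact lt_irrefl _ hl
  · have hwne : O m ≠ l := by
      intro h
      have : O.symm l = m := by rw [← h]; simp
      rw [this] at hl
      exact lt_irrefl _ hl
    have hne : N.symm (O m) ≠ O.symm (O m) := by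
      simp only [Equiv.symm_apply_apply]
      intro h
      have h2 : N (N.symm (O m)) = N m := by rw [h]
      rw [Equiv.apply_symm_apply, hm, Equiv.apply_symm_apply] at h2
      exact hwne h2
    have h1 := hnoworse (O m)
    unfold prefers at h1 ⊢
    rcases lt_trichotomy (I.wpref (O m) (N.symm (O m))) (I.wpref (O m) (O.symm (O m))) with h|h|h
    · exact h
    · exact absurd (I.wprefInj (O m) h) hne
    · exact absurd h h1
end
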